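/- If X and X' are independent, each uniformly distributed on a finite subset A of ℤ with |A| = n, then H(X + X') - H(X) ≥ 1/2 - (log n)/n - 1/(2n²). In particular, H(X + X') - H(X) ≥ 1/2 - o(1) as n → ∞. -/

import Mathlib

/-- Convolution of two functions on `ℤ`. -/
noncomputable def convZ (f g : ℤ → ℝ) : ℤ → ℝ := fun k => ∑' i : ℤ, f i * g (k - i)

/-- Shannon entropy of a probability mass function on `ℤ`. -/
noncomputable def entZ (f : ℤ → ℝ) : ℝ := ∑' i : ℤ, Real.negMulLog (f i)

/-- The uniform probability mass function on a finite subset of `ℤ`. -/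
noncomputable def unif (A : Finset ℤ) : ℤ → ℝ :=
  fun i => if i ∈ A then ((A.card : ℝ))⁻¹ else 0

open Finset Real

def repc (A : Finset ℤ) (k : ℤ) : ℕ := ((A ×ˢ A).filter fun p => p.1 + p.2 = k).card

def sumSet (A : Finset ℤ) : Finset ℤ := (A ×ˢ A).image fun p => p.1 + p.2

lemma repc_eq_zero {A : Finset ℤ} {k : ℤ} (h : k ∉ sumSet A) : repc A k = 0 := by
  rw [repc, Finset.card_eq_zero, Finset.filter_eq_empty_iff]
  intro p hp hk
  exact h (Finset.mem_image.2 ⟨p, hp, hk⟩)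

lemma conv_eq (A : Finset ℤ) (k : ℤ) :
    convZ (unif A) (unif A) k = (repc A k : ℝ) / (A.card : ℝ)^2 := by
  have h0 : ∀ i ∉ A, unif A i * unif A (k - i) = 0 := by
    intro i hi; simp [unif, hi]
  rw [convZ, tsum_eq_sum h0]
  have h1 : ∀ i ∈ A, unif A i * unif A (k - i)
      = if (k - i) ∈ A then ((A.card : ℝ)^2)⁻¹ else 0 := by
    intro i hi
    by_cases h : (k - i) ∈ A <;> simp [unif, hi, h, sq, mul_inv]
  rw [Finset.sum_congr rfl h1, ← Finset.sum_filter]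
  rw [Finset.sum_const]
  have hcard : (A.filter fun i => (k - i) ∈ A).card = repc A k := by
    apply Finset.card_nbij (fun i => (i, k - i))
    · intro a ha
      simp only [Finset.mem_coe, Finset.mem_filter] at ha ⊢
      simp [Finset.mem_product, ha.1, ha.2]
    · intro a _ b _ h
      exact congrArg Prod.fst h
    · intro p hp
      simp only [Finset.coe_filter, Set.mem_setOf, Finset.mem_product] at hp
      refine ⟨p.1, ?_, ?_⟩
      · simp only [Finset.coe_filter, Set.mem_setOf]
        constructor
        · exact hp.1.1
        · have : k - p.1 = p.2 := by omega
          rw [this]; exact hp.1.2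
      · have : k - p.1 = p.2 := by omega
        simp [this]
  rw [hcard]
  rw [nsmul_eq_mul, div_eq_mul_inv]

lemma entZ_unif (A : Finset ℤ) (hA : A.Nonempty) : entZ (unif A) = Real.log A.card := by
  have h0 : ∀ i ∉ A, Real.negMulLog (unif A i) = 0 := by
    intro i hi; simp [unif, hi]
  rw [entZ, tsum_eq_sum h0]
  have hc : (0:ℝ) < A.card := by
    exact_mod_cast Finset.card_pos.2 hA
  have h1 : ∀ i ∈ A, Real.negMulLog (unif A i) = Real.log A.card / A.card := by
    intro i hi
    simp only [unif, hi, if_true, Real.negMulLog, Real.log_inv]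
    ring
  rw [Finset.sum_congr rfl h1, Finset.sum_const, nsmul_eq_mul]
  field_simp

section Counting
variable (A : Finset ℤ) {n : ℕ} (hn : A.card = n)

lemma exists_idx {a : ℤ} (ha : a ∈ A) : ∃ k : Fin n, A.orderEmbOfFin hn k = a := by
  have := Finset.range_orderEmbOfFin A hn
  have : a ∈ Set.range (A.orderEmbOfFin hn) := by rw [this]; exact_mod_cast ha
  exact this

lemma filter_lt_card (j : Fin n) :
    (A.filter fun a => a < A.orderEmbOfFin hn j).card = j.val := by
  rw [← Fin.card_Iio j]
  symm
  apply Finset.card_nbij (fun k => A.orderEmbOfFin hn k)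
  · intro k hk
    simp only [Finset.mem_coe, Finset.mem_filter]
    exact ⟨A.orderEmbOfFin_mem hn k, (A.orderEmbOfFin hn).strictMono (Finset.mem_Iio.1 hk)⟩
  · intro x _ y _ h
    exact (A.orderEmbOfFin hn).injective h
  · intro a ha
    simp only [Finset.coe_filter, Set.mem_setOf] at ha
    obtain ⟨k, hk⟩ := exists_idx A hn ha.1
    refine ⟨k, ?_, hk⟩
    simp only [Finset.coe_Iio, Set.mem_Iio]
    have := ha.2
    rw [← hk] at this
    exact (A.orderEmbOfFin hn).strictMono.lt_iff_lt.1 this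

lemma filter_le_card (j : Fin n) :
    (A.filter fun a => a ≤ A.orderEmbOfFin hn j).card = j.val + 1 := by
  rw [← Fin.card_Iic j]
  symm
  apply Finset.card_nbij (fun k => A.orderEmbOfFin hn k)
  · intro k hk
    simp only [Finset.mem_coe, Finset.mem_filter]
    exact ⟨A.orderEmbOfFin_mem hn k,
      (A.orderEmbOfFin hn).monotone (Finset.mem_Iic.1 hk)⟩
  · intro x _ y _ h
    exact (A.orderEmbOfFin hn).injective h
  · intro a ha
    simp only [Finset.coe_filter, Set.mem_setOf] at ha
    obtain ⟨k, hk⟩ := exists_idx A hn ha.1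
    refine ⟨k, ?_, hk⟩
    simp only [Finset.coe_Iic, Set.mem_Iic]
    have := ha.2
    rw [← hk] at this
    exact (A.orderEmbOfFin hn).le_iff_le.1 this

lemma filter_gt_card (j : Fin n) :
    (A.filter fun a => A.orderEmbOfFin hn j < a).card = n - (j.val + 1) := by
  have h := Finset.card_filter_add_card_filter_not
    (s := A) (p := fun a => a ≤ A.orderEmbOfFin hn j)
  simp only [not_le] at h
  have h2 := filter_le_card A hn j
  omega

lemma filter_ge_card (j : Fin n) :
    (A.filter fun a => A.orderEmbOfFin hn j ≤ a).card = n - j.val := by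
  have h := Finset.card_filter_add_card_filter_not
    (s := A) (p := fun a => a < A.orderEmbOfFin hn j)
  simp only [not_lt] at h
  have h2 := filter_lt_card A hn j
  omega

end Counting

section KeyBound
variable (A : Finset ℤ) {n : ℕ} (hn : A.card = n)

-- bound the part with p.1 > c - 1 by injecting via p.2
lemma card_fiber_snd (s : ℤ) (c : ℤ) (B : Finset ℤ)
    (hB : ∀ p : ℤ × ℤ, p ∈ A ×ˢ A → p.1 + p.2 = s → c ≤ p.1 → p.2 ∈ B) :
    (((A ×ˢ A).filter fun p => p.1 + p.2 = s).filter fun p => ¬ p.1 ≤ c - 1).card ≤ B.card := by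
  apply Finset.card_le_card_of_injOn (fun p => p.2)
  · intro p hp
    simp only [Finset.mem_coe, Finset.mem_filter, Finset.mem_product, not_le] at hp
    exact hB p (Finset.mem_product.2 hp.1.1) hp.1.2 (by omega)
  · intro p hp q hq h
    simp only [Finset.mem_coe, Finset.mem_filter, Finset.mem_product] at hp hq
    have h1 := hp.1.2; have h2 := hq.1.2
    have h3 : p.2 = q.2 := h
    have : p.1 = q.1 := by omega
    exact Prod.ext this h3

-- bound the part with p.1 ≤ c by injecting via p.2
lemma card_fiber_snd' (s : ℤ) (c : ℤ) (B : Finset ℤ)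
    (hB : ∀ p : ℤ × ℤ, p ∈ A ×ˢ A → p.1 + p.2 = s → p.1 ≤ c → p.2 ∈ B) :
    (((A ×ˢ A).filter fun p => p.1 + p.2 = s).filter fun p => p.1 ≤ c).card ≤ B.card := by
  apply Finset.card_le_card_of_injOn (fun p => p.2)
  · intro p hp
    simp only [Finset.mem_coe, Finset.mem_filter, Finset.mem_product] at hp
    exact hB p (Finset.mem_product.2 hp.1.1) hp.1.2 hp.2
  · intro p hp q hq h
    simp only [Finset.mem_coe, Finset.mem_filter, Finset.mem_product] at hp hq
    have h1 := hp.1.2; have h2 := hq.1.2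
    have h3 : p.2 = q.2 := h
    have : p.1 = q.1 := by omega
    exact Prod.ext this h3

-- bound the part with p.1 ≤ c by injecting via p.1
lemma card_fiber_fst (s : ℤ) (c : ℤ) (B : Finset ℤ)
    (hB : ∀ p : ℤ × ℤ, p ∈ A ×ˢ A → p.1 + p.2 = s → p.1 ≤ c → p.1 ∈ B) :
    (((A ×ˢ A).filter fun p => p.1 + p.2 = s).filter fun p => p.1 ≤ c).card ≤ B.card := by
  apply Finset.card_le_card_of_injOn (fun p => p.1)
  · intro p hp
    simp only [Finset.mem_coe, Finset.mem_filter, Finset.mem_product] at hp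
    exact hB p (Finset.mem_product.2 hp.1.1) hp.1.2 hp.2
  · intro p hp q hq h
    simp only [Finset.mem_coe, Finset.mem_filter, Finset.mem_product] at hp hq
    have h1 := hp.1.2; have h2 := hq.1.2
    have h3 : p.1 = q.1 := h
    have : p.2 = q.2 := by omega
    exact Prod.ext h3 this

-- bound the part with p.1 > c - 1 by injecting via p.1
lemma card_fiber_fst' (s : ℤ) (c : ℤ) (B : Finset ℤ)
    (hB : ∀ p : ℤ × ℤ, p ∈ A ×ˢ A → p.1 + p.2 = s → c ≤ p.1 → p.1 ∈ B) :
    (((A ×ˢ A).filter fun p => p.1 + p.2 = s).filter fun p => ¬ p.1 ≤ c - 1).card ≤ B.card := by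
  apply Finset.card_le_card_of_injOn (fun p => p.1)
  · intro p hp
    simp only [Finset.mem_coe, Finset.mem_filter, Finset.mem_product, not_le] at hp
    exact hB p (Finset.mem_product.2 hp.1.1) hp.1.2 (by omega)
  · intro p hp q hq h
    simp only [Finset.mem_coe, Finset.mem_filter, Finset.mem_product] at hp hq
    have h1 := hp.1.2; have h2 := hq.1.2
    have h3 : p.1 = q.1 := h
    have : p.2 = q.2 := by omega
    exact Prod.ext h3 this

lemma repc_split_le (i j : Fin n) :
    repc A (A.orderEmbOfFin hn i + A.orderEmbOfFin hn j) ≤ (i.val + 1) + j.val := by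
  have hsplit := Finset.card_filter_add_card_filter_not
    (s := (A ×ˢ A).filter fun p => p.1 + p.2 = A.orderEmbOfFin hn i + A.orderEmbOfFin hn j)
    (p := fun p => p.1 ≤ (A.orderEmbOfFin hn i + 1) - 1)
  have h1 := card_fiber_fst A (A.orderEmbOfFin hn i + A.orderEmbOfFin hn j)
    ((A.orderEmbOfFin hn i + 1) - 1) (A.filter fun a => a ≤ A.orderEmbOfFin hn i) ?_
  have h2 := card_fiber_snd A (A.orderEmbOfFin hn i + A.orderEmbOfFin hn j)
    (A.orderEmbOfFin hn i + 1) (A.filter fun a => a < A.orderEmbOfFin hn j) ?_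
  · rw [filter_le_card A hn i] at h1
    rw [filter_lt_card A hn j] at h2
    have hr : repc A (A.orderEmbOfFin hn i + A.orderEmbOfFin hn j)
        = ((A ×ˢ A).filter fun p => p.1 + p.2 = A.orderEmbOfFin hn i + A.orderEmbOfFin hn j).card := rfl
    omega
  · intro p hp hs hc
    exact Finset.mem_filter.2 ⟨(Finset.mem_product.1 hp).2, by omega⟩
  · intro p hp hs hc
    exact Finset.mem_filter.2 ⟨(Finset.mem_product.1 hp).1, by omega⟩

lemma repc_split_ge (i j : Fin n) :
    repc A (A.orderEmbOfFin hn i + A.orderEmbOfFin hn j) ≤ (n - i.val) + (n - (j.val + 1)) := by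
  have hsplit := Finset.card_filter_add_card_filter_not
    (s := (A ×ˢ A).filter fun p => p.1 + p.2 = A.orderEmbOfFin hn i + A.orderEmbOfFin hn j)
    (p := fun p => p.1 ≤ A.orderEmbOfFin hn i - 1)
  have h1 := card_fiber_snd' A (A.orderEmbOfFin hn i + A.orderEmbOfFin hn j)
    (A.orderEmbOfFin hn i - 1) (A.filter fun a => A.orderEmbOfFin hn j < a) ?_
  have h2 := card_fiber_fst' A (A.orderEmbOfFin hn i + A.orderEmbOfFin hn j)
    (A.orderEmbOfFin hn i) (A.filter fun a => A.orderEmbOfFin hn i ≤ a) ?_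
  · rw [filter_gt_card A hn j] at h1
    rw [filter_ge_card A hn i] at h2
    have hr : repc A (A.orderEmbOfFin hn i + A.orderEmbOfFin hn j)
        = ((A ×ˢ A).filter fun p => p.1 + p.2 = A.orderEmbOfFin hn i + A.orderEmbOfFin hn j).card := rfl
    omega
  · intro p hp hs hc
    exact Finset.mem_filter.2 ⟨(Finset.mem_product.1 hp).1, hc⟩
  · intro p hp hs hc
    exact Finset.mem_filter.2 ⟨(Finset.mem_product.1 hp).2, by omega⟩

lemma repc_le_min (i j : Fin n) :
    repc A (A.orderEmbOfFin hn i + A.orderEmbOfFin hn j)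
      ≤ min (i.val + j.val + 1) (2 * n - 1 - (i.val + j.val)) := by
  have h1 := repc_split_le A hn i j
  have h2 := repc_split_ge A hn i j
  have hi := i.isLt
  have hj := j.isLt
  omega

lemma one_le_repc (i j : Fin n) :
    1 ≤ repc A (A.orderEmbOfFin hn i + A.orderEmbOfFin hn j) := by
  rw [Nat.one_le_iff_ne_zero, ← Nat.pos_iff_ne_zero, repc, Finset.card_pos]
  exact ⟨(A.orderEmbOfFin hn i, A.orderEmbOfFin hn j), by
    simp [Finset.mem_product, A.orderEmbOfFin_mem hn]⟩

end KeyBound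

section Diagonal

lemma diag_count (n : ℕ) (hn : 1 ≤ n) (s : ℕ) (hs : s ≤ 2*n - 2) :
    ((Finset.univ : Finset (Fin n × Fin n)).filter fun q => q.1.val + q.2.val = s).card
      = min (s+1) (2*n - 1 - s) := by
  have hcard : ((Finset.univ : Finset (Fin n × Fin n)).filter fun q => q.1.val + q.2.val = s).card
      = (Finset.Icc (s+1-n) (min s (n-1))).card := by
    apply Finset.card_nbij (fun q => q.1.val)
    · intro q hq
      simp only [Finset.mem_coe, Finset.mem_filter, Finset.mem_univ, true_and] at hq
      have h1 := q.1.isLt; have h2 := q.2.isLt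
      simp only [Finset.mem_coe, Finset.mem_Icc]
      omega
    · intro q hq r hr h
      simp only [Finset.mem_coe, Finset.mem_filter] at hq hr
      have h3 : q.1.val = r.1.val := h
      have : q.2.val = r.2.val := by omega
      exact Prod.ext (Fin.ext h3) (Fin.ext this)
    · intro t ht
      simp only [Finset.coe_Icc, Set.mem_Icc] at ht
      have h1 : t < n := by omega
      have h2 : s - t < n := by omega
      refine ⟨(⟨t, h1⟩, ⟨s - t, h2⟩), ?_, rfl⟩
      simp only [Finset.coe_filter, Set.mem_setOf, Finset.mem_univ, true_and]
      omega
  rw [hcard, Nat.card_Icc]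
  omega

lemma sum_fin_diag (n : ℕ) (hn : 1 ≤ n) (g : ℕ → ℝ) :
    ∑ q : Fin n × Fin n, g (q.1.val + q.2.val)
      = ∑ s ∈ Finset.range (2*n - 1), ((min (s+1) (2*n - 1 - s) : ℕ) : ℝ) * g s := by
  rw [Finset.sum_comp g (fun q : Fin n × Fin n => q.1.val + q.2.val)]
  rw [Finset.sum_subset (s₁ := (Finset.univ : Finset (Fin n × Fin n)).image
      fun q => q.1.val + q.2.val) (s₂ := Finset.range (2*n - 1)) ?_ ?_]
  · apply Finset.sum_congr rfl
    intro s hs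
    rw [Finset.mem_range] at hs
    rw [diag_count n hn s (by omega), nsmul_eq_mul]
  · intro s hs
    rw [Finset.mem_image] at hs
    obtain ⟨q, _, hq⟩ := hs
    have h1 := q.1.isLt; have h2 := q.2.isLt
    rw [Finset.mem_range]
    omega
  · intro s _ hs
    have : ((Finset.univ : Finset (Fin n × Fin n)).filter fun q => q.1.val + q.2.val = s).card = 0 := by
      rw [Finset.card_eq_zero, Finset.filter_eq_empty_iff]
      intro q _
      intro hq
      exact hs (Finset.mem_image.2 ⟨q, Finset.mem_univ q, hq⟩)
    rw [this, zero_nsmul]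

lemma sum_c_gg (n : ℕ) (hn : 1 ≤ n) :
    ∑ s ∈ Finset.range (2*n - 1),
        ((min (s+1) (2*n - 1 - s) : ℕ) : ℝ) * Real.log ((min (s+1) (2*n - 1 - s) : ℕ) : ℝ)
      = (n : ℝ) * Real.log n + 2 * ∑ t ∈ Finset.range n, (t : ℝ) * Real.log t := by
  have key : ∀ m : ℕ, (fun t : ℕ => (t:ℝ) * Real.log t) m = (m:ℝ) * Real.log m := fun m => rfl
  set gg : ℕ → ℝ := fun t => (t:ℝ) * Real.log t with hgg
  have hsplit : Finset.range (2*n-1) = Finset.Ico 0 (2*n-1) := by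
    rw [Finset.range_eq_Ico]
  rw [hsplit, ← Finset.sum_Ico_consecutive _ (Nat.zero_le n) (by omega : n ≤ 2*n-1)]
  have hL : ∑ s ∈ Finset.Ico 0 n, gg (min (s+1) (2*n-1-s))
      = gg n + ∑ t ∈ Finset.range n, gg t := by
    rw [← Finset.range_eq_Ico]
    have : ∀ s ∈ Finset.range n, gg (min (s+1) (2*n-1-s)) = gg (s+1) := by
      intro s hs
      rw [Finset.mem_range] at hs
      congr 1
      omega
    rw [Finset.sum_congr rfl this]
    have h2 := Finset.sum_range_succ' gg n
    have h3 := Finset.sum_range_succ gg n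
    have h0 : gg 0 = 0 := by simp [hgg]
    rw [h3] at h2
    linarith
  have hR : ∑ s ∈ Finset.Ico n (2*n-1), gg (min (s+1) (2*n-1-s))
      = ∑ t ∈ Finset.range n, gg t := by
    have step : ∑ s ∈ Finset.Ico n (2*n-1), gg (min (s+1) (2*n-1-s))
        = ∑ t ∈ Finset.Ico 1 n, gg t := by
      apply Finset.sum_nbij' (fun s => 2*n-1-s) (fun t => 2*n-1-t)
      · intro s hs; rw [Finset.mem_Ico] at hs ⊢; omega
      · intro t ht; rw [Finset.mem_Ico] at ht ⊢; omega
      · intro s hs; rw [Finset.mem_Ico] at hs; omega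
      · intro t ht; rw [Finset.mem_Ico] at ht; omega
      · intro s hs
        rw [Finset.mem_Ico] at hs
        congr 1
        omega
    rw [step, Finset.range_eq_Ico, ← Finset.sum_Ico_consecutive _ (Nat.zero_le 1) (by omega : 1 ≤ n)]
    have : ∑ t ∈ Finset.Ico 0 1, gg t = 0 := by simp [hgg]
    rw [this, zero_add]
  rw [hL, hR, hgg]
  push_cast
  ring

end Diagonal

section Analysis

noncomputable def FF (x : ℝ) : ℝ := x^2/2 * Real.log x - x^2/4

lemma hasDerivAt_FF {x : ℝ} (hx : x ≠ 0) : HasDerivAt FF (x * Real.log x) x := by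
  have h1 : HasDerivAt (fun y : ℝ => y^2/2 * Real.log y) (x * Real.log x + x/2) x := by
    have hp : HasDerivAt (fun y : ℝ => y^2/2) x x := by
      have := (hasDerivAt_pow 2 x).div_const 2
      refine this.congr_deriv ?_
      simp
    have := hp.mul (Real.hasDerivAt_log hx)
    refine this.congr_deriv ?_
    field_simp
  have h2 : HasDerivAt (fun y : ℝ => y^2/4) (x/2) x := by
    have := (hasDerivAt_pow 2 x).div_const 4
    refine this.congr_deriv ?_
    simp
    ring
  have := h1.sub h2
  refine this.congr_deriv ?_
  ring

lemma tlogt_le_FF {t : ℝ} (ht : 1 ≤ t) : t * Real.log t ≤ FF (t+1) - FF t := by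
  have hcont : ContinuousOn (fun x : ℝ => x * Real.log x) (Set.uIcc t (t+1)) := by
    apply ContinuousOn.mul continuousOn_id
    apply Real.continuousOn_log.mono
    intro x hx
    rw [Set.mem_uIcc] at hx
    simp only [Set.mem_compl_iff, Set.mem_singleton_iff]
    intro h; rw [h] at hx
    rcases hx with h' | h' <;> linarith [h'.1, h'.2]
  have hint : IntervalIntegrable (fun x : ℝ => x * Real.log x) MeasureTheory.volume t (t+1) :=
    hcont.intervalIntegrable
  have hFTC : ∫ x in t..(t+1), x * Real.log x = FF (t+1) - FF t := by
    apply intervalIntegral.integral_eq_sub_of_hasDerivAt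
    · intro x hx
      rw [Set.mem_uIcc] at hx
      have hx0 : x ≠ 0 := by
        intro h; rw [h] at hx
        rcases hx with h' | h' <;> linarith [h'.1, h'.2]
      exact hasDerivAt_FF hx0
    · exact hint
  rw [← hFTC]
  have hconst : ∫ x in t..(t+1), (fun _ : ℝ => t * Real.log t) x = t * Real.log t := by
    simp
  rw [← hconst]
  apply intervalIntegral.integral_mono_on (by linarith) (intervalIntegrable_const) hint
  intro x hx
  rw [Set.mem_Icc] at hx
  have h1 : 1 ≤ x := by linarith
  have := Real.log_nonneg h1
  have := Real.log_nonneg ht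
  apply mul_le_mul hx.1 (Real.log_le_log (by linarith) hx.1) (Real.log_nonneg ht) (by linarith)

lemma sum_tlogt_le (n : ℕ) (hn : 1 ≤ n) :
    ∑ t ∈ Finset.range n, (t : ℝ) * Real.log t ≤ FF n + 1/4 := by
  induction n, hn using Nat.le_induction with
  | base =>
    simp [FF]
  | succ m hm ih =>
    rw [Finset.sum_range_succ]
    have hkey := tlogt_le_FF (t := (m:ℝ)) (by exact_mod_cast hm)
    have : ((m:ℝ)+1) = ((m+1 : ℕ) : ℝ) := by push_cast; ring
    rw [this] at hkey
    linarith

end Analysis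

section Main

lemma sum_repc (A : Finset ℤ) : ∑ k ∈ sumSet A, (repc A k : ℝ) = (A.card : ℝ)^2 := by
  have h := Finset.card_eq_sum_card_fiberwise
    (s := A ×ˢ A) (t := sumSet A) (f := fun p => p.1 + p.2)
    (fun p hp => Finset.mem_image.2 ⟨p, hp, rfl⟩)
  have : ∑ k ∈ sumSet A, (repc A k : ℝ) = ((A ×ˢ A).card : ℝ) := by
    rw [h]; push_cast; rfl
  rw [this, Finset.card_product]
  push_cast; ring

lemma repc_pos_of_mem {A : Finset ℤ} {k : ℤ} (h : k ∈ sumSet A) : 0 < repc A k := by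
  rw [repc, Finset.card_pos]
  obtain ⟨p, hp, hpk⟩ := Finset.mem_image.1 h
  exact ⟨p, Finset.mem_filter.2 ⟨hp, hpk⟩⟩

/-- For `X, X'` i.i.d. uniform on a finite `A ⊆ ℤ` with `|A| = n`,
`H(X + X') - H(X) ≥ 1/2 - (log n)/n - 1/(2n²)`. -/
theorem entropy_doubling_uniform (A : Finset ℤ) (n : ℕ) (hn : A.card = n) (hpos : 0 < n) :
    entZ (convZ (unif A) (unif A)) - entZ (unif A) ≥
      1 / 2 - Real.log n / n - 1 / (2 * (n : ℝ) ^ 2) := by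
  have hA : A.Nonempty := Finset.card_pos.1 (hn ▸ hpos)
  have hN : (0:ℝ) < n := by exact_mod_cast hpos
  have hN2 : (0:ℝ) < (n:ℝ)^2 := by positivity
  have hcardR : (A.card : ℝ) = (n : ℝ) := by exact_mod_cast hn
  -- entropy of unif
  have hEU : entZ (unif A) = Real.log n := by rw [entZ_unif A hA, hcardR]
  -- entropy of convolution as finite sum
  have hEC : entZ (convZ (unif A) (unif A))
      = ∑ k ∈ sumSet A, Real.negMulLog ((repc A k : ℝ) / (n:ℝ)^2) := by
    rw [entZ]
    rw [tsum_eq_sum (s := sumSet A) ?_]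
    · apply Finset.sum_congr rfl
      intro k _
      rw [conv_eq, hcardR]
    · intro k hk
      rw [conv_eq, hcardR, repc_eq_zero hk]
      simp
  -- rewrite each negMulLog term
  set R : ℝ := ∑ k ∈ sumSet A, (repc A k : ℝ) * Real.log (repc A k) with hR
  have hEC2 : entZ (convZ (unif A) (unif A)) = 2 * Real.log n - R / (n:ℝ)^2 := by
    rw [hEC]
    have hterm : ∀ k ∈ sumSet A, Real.negMulLog ((repc A k : ℝ) / (n:ℝ)^2)
        = (repc A k : ℝ) * (2 * Real.log n) / (n:ℝ)^2
          - (repc A k : ℝ) * Real.log (repc A k) / (n:ℝ)^2 := by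
      intro k hk
      have hr : (0:ℝ) < (repc A k : ℝ) := by exact_mod_cast repc_pos_of_mem hk
      rw [Real.negMulLog, Real.log_div (by positivity) (by positivity),
        Real.log_pow]
      push_cast
      ring
    rw [Finset.sum_congr rfl hterm, Finset.sum_sub_distrib]
    have h1 : ∑ k ∈ sumSet A, (repc A k : ℝ) * (2 * Real.log n) / (n:ℝ)^2
        = 2 * Real.log n := by
      rw [← Finset.sum_div, ← Finset.sum_mul, sum_repc, hcardR]
      field_simp
    rw [h1, ← Finset.sum_div]
  -- R as a sum over pairs
  have hRpairs : R = ∑ p ∈ A ×ˢ A, Real.log (repc A (p.1 + p.2)) := by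
    rw [Finset.sum_comp (fun k => Real.log (repc A k)) (fun p : ℤ × ℤ => p.1 + p.2)]
    rw [hR]
    apply Finset.sum_congr rfl
    intro k _
    rw [nsmul_eq_mul]
    rfl
  -- reindex over Fin n × Fin n
  have hRfin : R = ∑ q : Fin n × Fin n,
      Real.log (repc A (A.orderEmbOfFin hn q.1 + A.orderEmbOfFin hn q.2)) := by
    rw [hRpairs]
    symm
    apply Finset.sum_nbij (fun q : Fin n × Fin n => (A.orderEmbOfFin hn q.1, A.orderEmbOfFin hn q.2))
    · intro q _
      exact Finset.mem_product.2 ⟨A.orderEmbOfFin_mem hn q.1, A.orderEmbOfFin_mem hn q.2⟩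
    · intro q _ r _ h
      have h1 : A.orderEmbOfFin hn q.1 = A.orderEmbOfFin hn r.1 := congrArg Prod.fst h
      have h2 : A.orderEmbOfFin hn q.2 = A.orderEmbOfFin hn r.2 := congrArg Prod.snd h
      exact Prod.ext ((A.orderEmbOfFin hn).injective h1) ((A.orderEmbOfFin hn).injective h2)
    · intro p hp
      simp only [Finset.mem_coe, Finset.coe_product, Set.mem_prod] at hp
      obtain ⟨k1, hk1⟩ := exists_idx A hn hp.1
      obtain ⟨k2, hk2⟩ := exists_idx A hn hp.2
      refine ⟨(k1, k2), Finset.mem_coe.2 (Finset.mem_univ _), ?_⟩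
      simp [hk1, hk2]
    · intro q _
      rfl
  -- bound R
  have hn1 : 1 ≤ n := hpos
  have hRle : R ≤ (n:ℝ) * Real.log n + 2 * (FF n + 1/4) := by
    rw [hRfin]
    have hstep : ∑ q : Fin n × Fin n,
        Real.log (repc A (A.orderEmbOfFin hn q.1 + A.orderEmbOfFin hn q.2))
        ≤ ∑ q : Fin n × Fin n,
          (fun s => Real.log ((min (s+1) (2*n - 1 - s) : ℕ) : ℝ)) (q.1.val + q.2.val) := by
      apply Finset.sum_le_sum
      intro q _
      have h1 : (0:ℝ) < (repc A (A.orderEmbOfFin hn q.1 + A.orderEmbOfFin hn q.2) : ℝ) := by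
        exact_mod_cast one_le_repc A hn q.1 q.2
      apply Real.log_le_log h1
      exact_mod_cast repc_le_min A hn q.1 q.2
    refine hstep.trans ?_
    rw [sum_fin_diag n hn1 (fun s => Real.log ((min (s+1) (2*n - 1 - s) : ℕ) : ℝ))]
    rw [sum_c_gg n hn1]
    have := sum_tlogt_le n hn1
    linarith
  -- final arithmetic
  rw [hEC2, hEU, ge_iff_le]
  have hFF : FF n = (n:ℝ)^2/2 * Real.log n - (n:ℝ)^2/4 := rfl
  have hdiv : R / (n:ℝ)^2 ≤ ((n:ℝ) * Real.log n + 2 * (FF n + 1/4)) / (n:ℝ)^2 :=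
    (div_le_div_iff_of_pos_right hN2).2 hRle
  have heq : ((n:ℝ) * Real.log n + 2 * (FF n + 1/4)) / (n:ℝ)^2
      = Real.log n / n + Real.log n - 1/2 + 1/(2*(n:ℝ)^2) := by
    rw [hFF]
    field_simp
    ring
  rw [heq] at hdiv
  linarith

end Main
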